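/- Define the ternary copula operation on the open interval G = (0,1) ⊂ ℝ by μ₃[g,h,u] := g(1−h)u / (g(1−h)u + (1−g)h(1−u)). Then: (i) μ₃ maps G³ into G; (ii) μ₃ is totally associative: μ₃[μ₃[g,h,u],v,w] = μ₃[g,μ₃[h,u,v],w] = μ₃[g,h,μ₃[u,v,w]] for all g,h,u,v,w ∈ G; (iii) every element is idempotent: μ₃[g,g,g] = g, so the querelement of g is g itself; and (iv) for any fixed e ∈ G, the map φ(g) := μ₃[e,g,e] satisfies φ(φ(g)) = g for all g ∈ G. -/

import Mathlib

private lemma cop_mem (g h u : ℝ) (hg : g ∈ Set.Ioo (0:ℝ) 1) (hh : h ∈ Set.Ioo (0:ℝ) 1)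
    (hu : u ∈ Set.Ioo (0:ℝ) 1) :
    g * (1 - h) * u / (g * (1 - h) * u + (1 - g) * h * (1 - u)) ∈ Set.Ioo (0:ℝ) 1 := by
  obtain ⟨hg0, hg1⟩ := hg; obtain ⟨hh0, hh1⟩ := hh; obtain ⟨hu0, hu1⟩ := hu
  have h1h : (0:ℝ) < 1 - h := by linarith
  have h1g : (0:ℝ) < 1 - g := by linarith
  have h1u : (0:ℝ) < 1 - u := by linarith
  have hA : 0 < g * (1 - h) * u := by positivity
  have hB : 0 < (1 - g) * h * (1 - u) := by positivity
  constructor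
  · positivity
  · rw [div_lt_one (by linarith)]; linarith

/-- The ternary copula operation
`μ₃[g,h,u] = g(1-h)u / (g(1-h)u + (1-g)h(1-u))` on `G = (0,1) ⊂ ℝ`
(i) maps `G³` into `G`, (ii) is totally associative, (iii) is idempotent
(`μ₃[g,g,g] = g`, so the querelement of `g` is `g`), and (iv) for any fixed
`e ∈ G` the map `φ(g) = μ₃[e,g,e]` satisfies `φ(φ(g)) = g`. -/
theorem statement17 (f : ℝ → ℝ → ℝ → ℝ)
    (hf : ∀ g h u : ℝ,
      f g h u = g * (1 - h) * u / (g * (1 - h) * u + (1 - g) * h * (1 - u))) :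
    (∀ g h u : ℝ, g ∈ Set.Ioo (0 : ℝ) 1 → h ∈ Set.Ioo (0 : ℝ) 1 →
      u ∈ Set.Ioo (0 : ℝ) 1 → f g h u ∈ Set.Ioo (0 : ℝ) 1) ∧
    (∀ g h u v w : ℝ, g ∈ Set.Ioo (0 : ℝ) 1 → h ∈ Set.Ioo (0 : ℝ) 1 →
      u ∈ Set.Ioo (0 : ℝ) 1 → v ∈ Set.Ioo (0 : ℝ) 1 → w ∈ Set.Ioo (0 : ℝ) 1 →
      f (f g h u) v w = f g (f h u v) w ∧ f g (f h u v) w = f g h (f u v w)) ∧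
    (∀ g : ℝ, g ∈ Set.Ioo (0 : ℝ) 1 → f g g g = g) ∧
    (∀ e g : ℝ, e ∈ Set.Ioo (0 : ℝ) 1 → g ∈ Set.Ioo (0 : ℝ) 1 →
      f e (f e g e) e = g) := by
  have hmem : ∀ g h u : ℝ, g ∈ Set.Ioo (0:ℝ) 1 → h ∈ Set.Ioo (0:ℝ) 1 →
      u ∈ Set.Ioo (0:ℝ) 1 → f g h u ∈ Set.Ioo (0:ℝ) 1 := by
    intro g h u hg hh hu; rw [hf]; exact cop_mem g h u hg hh hu
  have hden : ∀ g h u : ℝ, g ∈ Set.Ioo (0:ℝ) 1 → h ∈ Set.Ioo (0:ℝ) 1 →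
      u ∈ Set.Ioo (0:ℝ) 1 → g * (1 - h) * u + (1 - g) * h * (1 - u) ≠ 0 := by
    intro g h u ⟨hg0, hg1⟩ ⟨hh0, hh1⟩ ⟨hu0, hu1⟩
    have h1h : (0:ℝ) < 1 - h := by linarith
    have h1g : (0:ℝ) < 1 - g := by linarith
    have h1u : (0:ℝ) < 1 - u := by linarith
    have : 0 < g * (1 - h) * u := by positivity
    have : 0 < (1 - g) * h * (1 - u) := by positivity
    positivity
  -- normal form for the five-fold product
  have key : ∀ g h u v w : ℝ, g ∈ Set.Ioo (0:ℝ) 1 → h ∈ Set.Ioo (0:ℝ) 1 →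
      u ∈ Set.Ioo (0:ℝ) 1 → v ∈ Set.Ioo (0:ℝ) 1 → w ∈ Set.Ioo (0:ℝ) 1 →
      f (f g h u) v w = g * (1-h) * u * (1-v) * w /
        (g * (1-h) * u * (1-v) * w + (1-g) * h * (1-u) * v * (1-w)) := by
    intro g h u v w hg hh hu hv hw
    have d1 := hden g h u hg hh hu
    have d2 := hden (f g h u) v w (hmem g h u hg hh hu) hv hw
    rw [hf (f g h u) v w] at *
    have d3 : g * (1-h) * u * (1-v) * w + (1-g) * h * (1-u) * v * (1-w) ≠ 0 := by
      obtain ⟨hg0, hg1⟩ := hg; obtain ⟨hh0, hh1⟩ := hh; obtain ⟨hu0, hu1⟩ := hu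
      obtain ⟨hv0, hv1⟩ := hv; obtain ⟨hw0, hw1⟩ := hw
      have h1h : (0:ℝ) < 1 - h := by linarith
      have h1g : (0:ℝ) < 1 - g := by linarith
      have h1u : (0:ℝ) < 1 - u := by linarith
      have h1v : (0:ℝ) < 1 - v := by linarith
      have h1w : (0:ℝ) < 1 - w := by linarith
      have : 0 < g * (1-h) * u * (1-v) * w := by positivity
      have : 0 < (1-g) * h * (1-u) * v * (1-w) := by positivity
      positivity
    rw [hf g h u] at d2 ⊢
    rw [div_eq_div_iff d2 d3]
    set D := g * (1 - h) * u + (1 - g) * h * (1 - u) with hD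
    field_simp
    rw [hD]; ring
  have key2 : ∀ g h u v w : ℝ, g ∈ Set.Ioo (0:ℝ) 1 → h ∈ Set.Ioo (0:ℝ) 1 →
      u ∈ Set.Ioo (0:ℝ) 1 → v ∈ Set.Ioo (0:ℝ) 1 → w ∈ Set.Ioo (0:ℝ) 1 →
      f g (f h u v) w = g * (1-h) * u * (1-v) * w /
        (g * (1-h) * u * (1-v) * w + (1-g) * h * (1-u) * v * (1-w)) := by
    intro g h u v w hg hh hu hv hw
    have d1 := hden h u v hh hu hv
    have d2 := hden g (f h u v) w hg (hmem h u v hh hu hv) hw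
    rw [hf g (f h u v) w]
    have d3 : g * (1-h) * u * (1-v) * w + (1-g) * h * (1-u) * v * (1-w) ≠ 0 := by
      obtain ⟨hg0, hg1⟩ := hg; obtain ⟨hh0, hh1⟩ := hh; obtain ⟨hu0, hu1⟩ := hu
      obtain ⟨hv0, hv1⟩ := hv; obtain ⟨hw0, hw1⟩ := hw
      have h1h : (0:ℝ) < 1 - h := by linarith
      have h1g : (0:ℝ) < 1 - g := by linarith
      have h1u : (0:ℝ) < 1 - u := by linarith
      have h1v : (0:ℝ) < 1 - v := by linarith
      have h1w : (0:ℝ) < 1 - w := by linarith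
      have : 0 < g * (1-h) * u * (1-v) * w := by positivity
      have : 0 < (1-g) * h * (1-u) * v * (1-w) := by positivity
      positivity
    rw [hf h u v] at d2 ⊢
    rw [div_eq_div_iff d2 d3]
    set D := h * (1 - u) * v + (1 - h) * u * (1 - v) with hD
    field_simp
    rw [hD]; ring
  have key3 : ∀ g h u v w : ℝ, g ∈ Set.Ioo (0:ℝ) 1 → h ∈ Set.Ioo (0:ℝ) 1 →
      u ∈ Set.Ioo (0:ℝ) 1 → v ∈ Set.Ioo (0:ℝ) 1 → w ∈ Set.Ioo (0:ℝ) 1 →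
      f g h (f u v w) = g * (1-h) * u * (1-v) * w /
        (g * (1-h) * u * (1-v) * w + (1-g) * h * (1-u) * v * (1-w)) := by
    intro g h u v w hg hh hu hv hw
    have d1 := hden u v w hu hv hw
    have d2 := hden g h (f u v w) hg hh (hmem u v w hu hv hw)
    rw [hf g h (f u v w)]
    have d3 : g * (1-h) * u * (1-v) * w + (1-g) * h * (1-u) * v * (1-w) ≠ 0 := by
      obtain ⟨hg0, hg1⟩ := hg; obtain ⟨hh0, hh1⟩ := hh; obtain ⟨hu0, hu1⟩ := hu
      obtain ⟨hv0, hv1⟩ := hv; obtain ⟨hw0, hw1⟩ := hw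
      have h1h : (0:ℝ) < 1 - h := by linarith
      have h1g : (0:ℝ) < 1 - g := by linarith
      have h1u : (0:ℝ) < 1 - u := by linarith
      have h1v : (0:ℝ) < 1 - v := by linarith
      have h1w : (0:ℝ) < 1 - w := by linarith
      have : 0 < g * (1-h) * u * (1-v) * w := by positivity
      have : 0 < (1-g) * h * (1-u) * v * (1-w) := by positivity
      positivity
    rw [hf u v w] at d2 ⊢
    rw [div_eq_div_iff d2 d3]
    set D := u * (1 - v) * w + (1 - u) * v * (1 - w) with hD
    field_simp
    rw [hD]; ring
  refine ⟨hmem, ?_, ?_, ?_⟩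
  · intro g h u v w hg hh hu hv hw
    rw [key g h u v w hg hh hu hv hw, key2 g h u v w hg hh hu hv hw,
      key3 g h u v w hg hh hu hv hw]
    exact ⟨rfl, rfl⟩
  · intro g hg
    have d := hden g g g hg hg hg
    rw [hf]
    rw [div_eq_iff d]; ring
  · intro e g he hg
    have d1 := hden e g e he hg he
    have d2 := hden e (f e g e) e he (hmem e g e he hg he) he
    rw [hf e (f e g e) e]
    rw [hf e g e] at d2 ⊢
    rw [div_eq_iff d2]
    set D := e * (1 - g) * e + (1 - e) * g * (1 - e) with hD
    field_simp
    rw [hD]; ring
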